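/- Let x ∈ ℝⁿ be a nonnegative k-sparse vector and let u ∈ ℝⁿ be arbitrary. Then ‖H_k(u⁺) − x‖₂ ≤ φ · ‖(u − x)_Ω‖₂, where Ω := supp(H_k(u⁺)) ∪ supp(x), u⁺ is the componentwise positive part of u, and φ = (√5 + 1)/2 is the golden ratio. -/
import Mathlib


/-- The Euclidean (ℓ₂) norm of a vector in ℝ^d. -/
noncomputable def l2 {d : ℕ} (v : Fin d → ℝ) : ℝ := Real.sqrt (∑ i, v i ^ 2)

/-- For a nonnegative `k`-sparse `x` and arbitrary `u`,
`‖H_k(u⁺) - x‖₂ ≤ φ ‖(u - x)_Ω‖₂` where `Ω = supp(H_k(u⁺)) ∪ supp(x)`,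
`u⁺` is the componentwise positive part of `u`, `H_k(u⁺) = (u⁺)_T` for an index set `T`
of `k` largest-in-magnitude entries of `u⁺` (ties broken arbitrarily),
and `φ = (√5 + 1)/2`. -/
theorem stmt9 {n k : ℕ} (x u : Fin n → ℝ) (hx0 : ∀ i, 0 ≤ x i)
    (hx : (Function.support x).ncard ≤ k)
    (T : Set (Fin n)) (hTcard : T.ncard = min k n)
    (hT : ∀ i ∈ T, ∀ j ∉ T, |max (u j) 0| ≤ |max (u i) 0|) :
    l2 (T.indicator (fun i => max (u i) 0) - x) ≤
      (Real.sqrt 5 + 1) / 2 *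
        l2 ((Function.support (T.indicator fun i => max (u i) 0) ∪
              Function.support x).indicator (u - x)) := by
  classical
  set a : Fin n → ℝ := fun i => max (u i) 0 with ha
  set φ : ℝ := (Real.sqrt 5 + 1) / 2 with hφdef
  have h5 : Real.sqrt 5 ^ 2 = 5 := Real.sq_sqrt (by norm_num)
  have hφ2 : φ ^ 2 = φ + 1 := by
    rw [hφdef]; nlinarith [h5]
  have hφ0 : (0:ℝ) ≤ φ := by
    rw [hφdef]; positivity
  set b : Fin n → ℝ := T.indicator a with hbdef
  have hb : ∀ i, b i = if i ∈ T then a i else 0 := fun i => Set.indicator_apply _ _ _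
  have ha0 : ∀ i, 0 ≤ a i := fun i => le_max_right _ _
  -- key componentwise fact
  have hax : ∀ i, (a i - x i) ^ 2 ≤ (u i - x i) ^ 2 := by
    intro i
    have hxi := hx0 i
    rcases le_or_gt 0 (u i) with h | h
    · have : a i = u i := max_eq_left h
      rw [this]
    · have : a i = 0 := max_eq_right h.le
      nlinarith
  set Sf : Finset (Fin n) := Finset.univ.filter (fun i => x i ≠ 0) with hSfdef
  set Tf : Finset (Fin n) := Finset.univ.filter (fun i => i ∈ T) with hTfdef
  have hSf : ∀ i, i ∈ Sf ↔ x i ≠ 0 := by intro i; simp [hSfdef]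
  have hTf : ∀ i, i ∈ Tf ↔ i ∈ T := by intro i; simp [hTfdef]
  set A1 : Finset (Fin n) := (Tf \ Sf).filter (fun i => a i ≠ 0) with hA1def
  set A2 : Finset (Fin n) := Sf ∩ Tf with hA2def
  set A3 : Finset (Fin n) := Sf \ Tf with hA3def
  set Ω : Finset (Fin n) := A1 ∪ A2 ∪ A3 with hΩdef
  -- cardinalities
  have hScard : Sf.card ≤ min k n := by
    have h1 : (Function.support x).ncard = Sf.card := by
      rw [Set.ncard_eq_toFinset_card']
      congr 1
      ext i; simp [hSfdef, Function.mem_support]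
    have h2 : Sf.card ≤ n := by
      simpa using Finset.card_le_univ Sf
    omega
  have hTcard' : Tf.card = min k n := by
    rw [← hTcard, Set.ncard_eq_toFinset_card']
    congr 1
    ext i; simp [hTfdef]
  have hcard : A3.card ≤ (Tf \ Sf).card := by
    have e1 := Finset.card_sdiff_add_card_inter Sf Tf
    have e2 := Finset.card_sdiff_add_card_inter Tf Sf
    have e3 : (Sf ∩ Tf).card = (Tf ∩ Sf).card := by rw [Finset.inter_comm]
    rw [hA3def]
    omega
  -- every a on T dominates every a off T
  have hdom : ∀ i ∈ T, ∀ j, j ∉ T → a j ≤ a i := by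
    intro i hi j hj
    have := hT i hi j hj
    rwa [abs_of_nonneg (ha0 j), abs_of_nonneg (ha0 i)] at this
  -- sum over A3 of a² bounded by sum over A1 of (u-x)²
  have hA1eq : ∑ j ∈ Tf \ Sf, (a j) ^ 2 = ∑ j ∈ A1, (u j - x j) ^ 2 := by
    rw [hA1def, ← Finset.sum_filter_of_ne (p := fun i => a i ≠ 0)]
    · apply Finset.sum_congr rfl
      intro j hj
      simp only [Finset.mem_filter, Finset.mem_sdiff] at hj
      have hxj : x j = 0 := by
        by_contra hc
        exact hj.1.2 ((hSf j).2 hc)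
      have haj : a j = u j := by
        rcases le_or_gt 0 (u j) with h | h
        · exact max_eq_left h
        · exact absurd (max_eq_right h.le) hj.2
      rw [hxj, haj, sub_zero]
    · intro i _ hne
      intro hc
      rw [hc] at hne
      simp at hne
  have hA3a : ∑ i ∈ A3, (a i) ^ 2 ≤ ∑ j ∈ A1, (u j - x j) ^ 2 := by
    rw [← hA1eq]
    rcases (Tf \ Sf).eq_empty_or_nonempty with h | h
    · have : A3 = ∅ := by
        rw [h] at hcard; simpa using Finset.card_eq_zero.mp (Nat.le_zero.mp hcard)
      simp [this, h]
    · obtain ⟨j0, hj0, hmin⟩ := Finset.exists_min_image (Tf \ Sf) (fun j => (a j) ^ 2) h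
      have hj0T : j0 ∈ T := (hTf j0).1 (Finset.mem_sdiff.mp hj0).1
      calc ∑ i ∈ A3, (a i) ^ 2 ≤ ∑ _i ∈ A3, (a j0) ^ 2 := by
            apply Finset.sum_le_sum
            intro i hi
            have hiT : i ∉ T := by
              have := (Finset.mem_sdiff.mp hi).2
              simpa [hTf] using this
            have := hdom j0 hj0T i hiT
            exact pow_le_pow_left₀ (ha0 i) this 2
        _ = (A3.card : ℝ) * (a j0) ^ 2 := by
            rw [Finset.sum_const, nsmul_eq_mul]
        _ ≤ ((Tf \ Sf).card : ℝ) * (a j0) ^ 2 := by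
            apply mul_le_mul_of_nonneg_right _ (sq_nonneg _)
            exact_mod_cast hcard
        _ ≤ ∑ j ∈ Tf \ Sf, (a j) ^ 2 := by
            have := Finset.card_nsmul_le_sum (Tf \ Sf) (fun j => (a j) ^ 2) ((a j0) ^ 2)
              (fun i hi => hmin i hi)
            simpa [nsmul_eq_mul] using this
  -- scalar inequality on A3
  have scalar : ∀ i, (x i) ^ 2 ≤ φ * (a i) ^ 2 + φ ^ 2 * (u i - x i) ^ 2 := by
    intro i
    have h1 : 0 ≤ φ * (φ * a i - x i) ^ 2 := mul_nonneg hφ0 (sq_nonneg _)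
    have h2 := hax i
    have e : φ * (a i) ^ 2 + φ ^ 2 * (a i - x i) ^ 2 - (x i) ^ 2 = φ * (φ * a i - x i) ^ 2 := by
      linear_combination ((x i) ^ 2 - φ * (a i) ^ 2) * hφ2
    have h4 : φ ^ 2 * (a i - x i) ^ 2 ≤ φ ^ 2 * (u i - x i) ^ 2 :=
      mul_le_mul_of_nonneg_left h2 (by positivity)
    linarith
  have hA3 : ∑ i ∈ A3, (x i) ^ 2 ≤
      φ * (∑ j ∈ A1, (u j - x j) ^ 2) + φ ^ 2 * ∑ i ∈ A3, (u i - x i) ^ 2 := by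
    calc ∑ i ∈ A3, (x i) ^ 2
        ≤ ∑ i ∈ A3, (φ * (a i) ^ 2 + φ ^ 2 * (u i - x i) ^ 2) :=
          Finset.sum_le_sum (fun i _ => scalar i)
      _ = φ * ∑ i ∈ A3, (a i) ^ 2 + φ ^ 2 * ∑ i ∈ A3, (u i - x i) ^ 2 := by
          rw [Finset.sum_add_distrib, Finset.mul_sum, Finset.mul_sum]
      _ ≤ _ := by
          have := mul_le_mul_of_nonneg_left hA3a hφ0
          linarith
  -- disjointness
  have hd12 : Disjoint A1 A2 := by
    rw [Finset.disjoint_left]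
    intro i hi1 hi2
    have : i ∉ Sf := (Finset.mem_sdiff.mp (Finset.mem_filter.mp hi1).1).2
    exact this (Finset.mem_inter.mp hi2).1
  have hd123 : Disjoint (A1 ∪ A2) A3 := by
    rw [Finset.disjoint_left]
    intro i hi hi3
    have hiT : i ∉ Tf := (Finset.mem_sdiff.mp hi3).2
    rcases Finset.mem_union.mp hi with h | h
    · exact hiT (Finset.mem_sdiff.mp (Finset.mem_filter.mp h).1).1
    · exact hiT (Finset.mem_inter.mp h).2
  -- membership facts about Ω
  have hout : ∀ i, i ∉ Ω → b i = 0 ∧ x i = 0 := by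
    intro i hi
    rw [hΩdef] at hi
    simp only [Finset.mem_union, not_or] at hi
    obtain ⟨⟨h1, h2⟩, h3⟩ := hi
    have hxi : x i = 0 := by
      by_contra hc
      have hiS : i ∈ Sf := (hSf i).2 hc
      by_cases hiT : i ∈ Tf
      · exact h2 (Finset.mem_inter.mpr ⟨hiS, hiT⟩)
      · exact h3 (Finset.mem_sdiff.mpr ⟨hiS, hiT⟩)
    refine ⟨?_, hxi⟩
    rw [hb i]
    split_ifs with hT'
    · by_contra hc
      have hiS : i ∉ Sf → False := by
        intro hnS
        exact h1 (Finset.mem_filter.mpr ⟨Finset.mem_sdiff.mpr ⟨(hTf i).2 hT', hnS⟩, hc⟩)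
      by_cases hS : i ∈ Sf
      · exact h2 (Finset.mem_inter.mpr ⟨hS, (hTf i).2 hT'⟩)
      · exact hiS hS
    · rfl
  have hinΩ : ∀ i ∈ Ω, i ∈ Function.support b ∪ Function.support x := by
    intro i hi
    rw [hΩdef] at hi
    rcases Finset.mem_union.mp hi with h | h3
    · rcases Finset.mem_union.mp h with h1 | h2
      · left
        have hm := Finset.mem_filter.mp h1
        have hiT : i ∈ T := (hTf i).1 (Finset.mem_sdiff.mp hm.1).1
        have : b i = a i := by rw [hb i, if_pos hiT]
        simp only [Function.mem_support, this]
        exact hm.2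
      · right
        exact (hSf i).1 (Finset.mem_inter.mp h2).1
    · right
      exact (hSf i).1 (Finset.mem_sdiff.mp h3).1
  -- reduce goal to sums
  have keyL : ∑ i, ((T.indicator a - x) i) ^ 2 = ∑ i ∈ Ω, (b i - x i) ^ 2 := by
    rw [← Finset.sum_subset (Finset.subset_univ Ω)]
    · apply Finset.sum_congr rfl
      intro i _
      simp [hbdef, Pi.sub_apply]
    · intro i _ hi
      obtain ⟨hb0, hx0'⟩ := hout i hi
      simp only [Pi.sub_apply]
      rw [← hbdef] at *
      rw [hb0, hx0']
      norm_num
  have keyR : ∑ i, ((Function.support b ∪ Function.support x).indicator (u - x) i) ^ 2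
      = ∑ i ∈ Ω, (u i - x i) ^ 2 := by
    rw [← Finset.sum_subset (Finset.subset_univ Ω)]
    · apply Finset.sum_congr rfl
      intro i hi
      rw [Set.indicator_of_mem (hinΩ i hi)]
      simp [Pi.sub_apply]
    · intro i _ hi
      obtain ⟨hb0, hx0'⟩ := hout i hi
      have : i ∉ Function.support b ∪ Function.support x := by
        simp [Function.mem_support, hb0, hx0']
      rw [Set.indicator_of_notMem this]
      norm_num
  -- the main sum inequality
  have main : ∑ i ∈ Ω, (b i - x i) ^ 2 ≤ φ ^ 2 * ∑ i ∈ Ω, (u i - x i) ^ 2 := by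
    rw [hΩdef, Finset.sum_union hd123, Finset.sum_union hd12,
        Finset.sum_union hd123, Finset.sum_union hd12]
    set S1 := ∑ i ∈ A1, (u i - x i) ^ 2 with hS1
    set S2 := ∑ i ∈ A2, (u i - x i) ^ 2 with hS2
    set S3 := ∑ i ∈ A3, (u i - x i) ^ 2 with hS3
    have e1 : ∑ i ∈ A1, (b i - x i) ^ 2 = S1 := by
      apply Finset.sum_congr rfl
      intro i hi
      have hm := Finset.mem_filter.mp hi
      have hiT : i ∈ T := (hTf i).1 (Finset.mem_sdiff.mp hm.1).1
      have hxi : x i = 0 := by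
        by_contra hc
        exact (Finset.mem_sdiff.mp hm.1).2 ((hSf i).2 hc)
      have hui : a i = u i := by
        rcases le_or_gt 0 (u i) with h | h
        · exact max_eq_left h
        · exact absurd (max_eq_right h.le) hm.2
      rw [hb i, if_pos hiT, hxi, hui]
    have e2 : ∑ i ∈ A2, (b i - x i) ^ 2 ≤ S2 := by
      apply Finset.sum_le_sum
      intro i hi
      have hiT : i ∈ T := (hTf i).1 (Finset.mem_inter.mp hi).2
      rw [hb i, if_pos hiT]
      exact hax i
    have e3 : ∑ i ∈ A3, (b i - x i) ^ 2 = ∑ i ∈ A3, (x i) ^ 2 := by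
      apply Finset.sum_congr rfl
      intro i hi
      have hiT : i ∉ T := by
        have := (Finset.mem_sdiff.mp hi).2
        simpa [hTf] using this
      rw [hb i, if_neg hiT]
      ring
    have hS2nn : 0 ≤ S2 := Finset.sum_nonneg (fun i _ => sq_nonneg _)
    have hS1nn : 0 ≤ S1 := Finset.sum_nonneg (fun i _ => sq_nonneg _)
    have hS3nn : 0 ≤ S3 := Finset.sum_nonneg (fun i _ => sq_nonneg _)
    rw [e1, e3]
    nlinarith [hA3, e2, hφ2, hφ0, hS1nn, hS2nn, hS3nn]
  -- conclude via sqrt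
  unfold l2
  rw [keyL] at *
  calc Real.sqrt (∑ i ∈ Ω, (b i - x i) ^ 2)
      ≤ Real.sqrt (φ ^ 2 * ∑ i ∈ Ω, (u i - x i) ^ 2) := Real.sqrt_le_sqrt main
    _ = φ * Real.sqrt (∑ i ∈ Ω, (u i - x i) ^ 2) := by
        rw [Real.sqrt_mul (sq_nonneg φ), Real.sqrt_sq hφ0]
    _ = φ * Real.sqrt (∑ i, ((Function.support b ∪ Function.support x).indicator (u - x) i) ^ 2) := by
        rw [keyR]
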